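/- For every positive integer n, C(2n, n) < (4^n / √(π n)) · exp(-1/(8n) + 1/(192 n³) - 1/(640 n⁵) + 17/(14336 n⁷)). -/

import Mathlib

open Real Filter Stirling

noncomputable def Gf (x : ℝ) : ℝ := -1/(8*x) + 1/(192*x^3) - 1/(640*x^5) + 17/(14336*x^7)

noncomputable def Af (s : ℝ) : ℝ := (3208318 + s * ((29364594 + s * ((121243766 + s * ((299525562 + s * ((493526922 + s * ((571433310 + s * ((476698670 + s * ((288664320 + s * ((125933920 + s * ((38606400 + s * ((7896000 + s * ((967680 + s * (53760))))))))))))))))))))))))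
noncomputable def Bf (s : ℝ) : ℝ := 215040*(s+1)^7*(s+2)^7
noncomputable def Pf (s : ℝ) : ℝ := (104311447712372380164265594289128244736 + s * ((4795746082918275511280127758090802764544 + s * ((108279301910992603233411998163689676361728 + s * ((1600368158656415715512544108903725936110080 + s * ((17414439207667286425668869519373346252546560 + s * ((148770293802958398046499118517224290331126528 + s * ((1039053179163267938025914271812745715575263232 + s * ((6100605948742419486637745981531164500077666304 + s * ((30728136170779264253948326947076247729005512960 + s * ((134840837888916195876253884769428846894771820800 + s * ((521762495994932475255073313466619225549545518592 + s * ((1797623896791430348537962375818793171376732343808 + s * ((5558288731027500036035752232085735684481996336896 + s * ((15525923656179985563034621104996998782360791648000 + s * ((39395801209446486633990515218412618131490739179520 + s * ((91234186884050091237577399734131184097157017004544 + s * ((193608755431420867783777049307467251600988899128576 + s * ((377793004472319787037522358979286383336436763140352 + s * ((679897117710194330946201241326497461537016939281920 + s * ((1131409200119565007822570542888758550366018848686080 + s * ((1744868632051764246812763713350187124730597057714944 + s * ((2498754216172034575891842914072286830818934297254656 + s * ((3328441892091376423601924967116338313462138871992832 + s * ((4130039312549677161169732991531068962406756058534400 +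 s * ((4779834294755080540466576406479758274851505803142400 + s * ((5165180839962153881280302891507158906136224077753600 + s * ((5216347536222037889009304211153305639926304085478400 + s * ((4926984476783522053802862905980264171370252951884800 + s * ((4355022656823021888911005919948897153512363125638400 + s * ((3604075600261190346298464391486270409371600213440000 + s * ((2793397049980620690700894344694209131010369121420800 + s * ((2028107201601600563231027520446293914768265148928000 + s * ((1379421156053913043149142885897040668239533509344000 + s * ((878867363056706741098281178905731068426078579200000 + s * ((524429527236382199557346129817969470540669876736000 + s * ((292986926316950061176999408923828024914657994752000 + s * ((153182082868830067729328922510210299312567184384000 + s * ((74904252670631728157553585268072316133500952576000 + s * ((34230983275477140505105635746859346524755140608000 + s * ((14606743817664609609512520033533818843338178560000 + s * ((5813544571768723082249651380332445851339571200000 + s * ((2155427764589847401728743154728077941659402240000 + s * ((743348851234300885411873654149269932678840320000 + s * ((238056883485132634356673285511172961735802880000 + s * ((70655734780894854016900252311102288486727680000 + s * ((19391632663424316882683494923368467802357760000 + s * ((4908578683805156362475592287850420492042240000 + s * ((1142546041215153123307597665733612614451200000 + s * ((243706667733806866722019611186262808985600000 + s * ((47445312941834638063874492760456167424000000 + s *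 ((8390993710541963833723479177470725324800000 + s * ((1340684513635791229177358955484230451200000 + s * ((192254344298285060477842628314713292800000 + s * ((24548299727891511086571773299890585600000 + s * ((2764108416311955843521709031922073600000 + s * ((271165247553365171161088533305753600000 + s * ((22822620456598720843104421045862400000 + s * ((1614865321519746174755491597516800000 + s * ((93421939052283870676682539008000000 + s * ((4243330451484578876334538752000000 + s * ((141908906389013473801745203200000 + s * ((3106911156111706289917132800000 + s * ((33407646839910820321689600000 + s * ((0 + s * ((0 + s * ((0 + s * ((0 + s * ((0 + s * ((0 + s * ((0 + s * (0))))))))))))))))))))))))))))))))))))))))))))))))))))))))))))))))))))))))))))))))))))))))))))))))))))))))))))))))))))))))))))))))))))))))))))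

lemma frac_sum (a b : ℝ) (hb : b ≠ 0) : a/b + (a/b)^2/2 + (a/b)^3/6 + (a/b)^4/24 + (a/b)^5/100
    = (600*a*b^4 + 300*a^2*b^3 + 100*a^3*b^2 + 25*a^4*b + 6*a^5)/(600*b^5) := by
  field_simp
  ring

lemma polykey (s : ℝ) :
    600*(Bf s)^5 - (4*(s+1)*(s+2)) * (600*(Af s)*(Bf s)^4 + 300*(Af s)^2*(Bf s)^3
      + 100*(Af s)^3*(Bf s)^2 + 25*(Af s)^4*(Bf s) + 6*(Af s)^5) = Pf s := by
  unfold Af Bf Pf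
  ring

lemma core_ineq (x : ℝ) (hx : 1 ≤ x) :
    Real.exp (2*(Gf (x+1) - Gf x)) < 1 + 1/(4*x*(x+1)) := by
  have hs : (0:ℝ) ≤ x - 1 := by linarith
  set s : ℝ := x - 1 with hsdef
  have hx0 : (0:ℝ) < x := by linarith
  have hx1 : (0:ℝ) < x + 1 := by linarith
  have h1 : s + 1 = x := by ring
  have h2 : s + 2 = x + 1 := by ring
  have hBpos : 0 < Bf s := by rw [Bf, h1, h2]; positivity
  have hApos : 0 < Af s := by
    rw [Af]
    exact (add_pos_of_pos_of_nonneg (by norm_num : (0:ℝ) < 3208318) (mul_nonneg hs (add_nonneg (by norm_num : (0:ℝ) ≤ 29364594) (mul_nonneg hs (add_nonneg (by norm_num : (0:ℝ) ≤ 121243766) (mul_nonneg hs (add_nonneg (by norm_num : (0:ℝ) ≤ 299525562) (mul_nonneg hs (add_nonneg (by norm_num : (0:ℝ) ≤ 493526922) (mul_nonneg hs (add_nonneg (by norm_num : (0:ℝ) ≤ 571433310) (mul_nonneg hs (add_nonneg (by norm_num : (0:ℝ) ≤ 476698670) (mul_nonneg hs (add_nonneg (by norm_num : (0:ℝ) ≤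 288664320) (mul_nonneg hs (add_nonneg (by norm_num : (0:ℝ) ≤ 125933920) (mul_nonneg hs (add_nonneg (by norm_num : (0:ℝ) ≤ 38606400) (mul_nonneg hs (add_nonneg (by norm_num : (0:ℝ) ≤ 7896000) (mul_nonneg hs (add_nonneg (by norm_num : (0:ℝ) ≤ 967680) (mul_nonneg hs (by norm_num : (0:ℝ) ≤ 53760)))))))))))))))))))))))))
  have hPpos : 0 < Pf s := by
    rw [Pf]
    exact (add_pos_of_pos_of_nonneg (by norm_num : (0:ℝ) < 104311447712372380164265594289128244736) (mul_nonneg hs (add_nonneg (by norm_num : (0:ℝ) ≤ 4795746082918275511280127758090802764544) (mul_nonneg hs (add_nonneg (by norm_num : (0:ℝ) ≤ 108279301910992603233411998163689676361728) (mul_nonneg hs (add_nonneg (by norm_num : (0:ℝ) ≤ 1600368158656415715512544108903725936110080) (mul_nonneg hs (add_nonneg (by norm_num : (0:ℝ) ≤ 17414439207667286425668869519373346252546560) (mul_nonneg hs (add_nonneg (by norm_num : (0:ℝ) ≤ 148770293802958398046499118517224290331126528) (mul_nonneg hs (add_nonneg (by norm_num : (0:ℝ) ≤ 1039053179163267938025914271812745715575263232)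 (mul_nonneg hs (add_nonneg (by norm_num : (0:ℝ) ≤ 6100605948742419486637745981531164500077666304) (mul_nonneg hs (add_nonneg (by norm_num : (0:ℝ) ≤ 30728136170779264253948326947076247729005512960) (mul_nonneg hs (add_nonneg (by norm_num : (0:ℝ) ≤ 134840837888916195876253884769428846894771820800) (mul_nonneg hs (add_nonneg (by norm_num : (0:ℝ) ≤ 521762495994932475255073313466619225549545518592) (mul_nonneg hs (add_nonneg (by norm_num : (0:ℝ) ≤ 1797623896791430348537962375818793171376732343808) (mul_nonneg hs (add_nonneg (by norm_num : (0:ℝ) ≤ 5558288731027500036035752232085735684481996336896) (mul_nonneg hs (add_nonneg (by norm_num : (0:ℝ) ≤ 15525923656179985563034621104996998782360791648000) (mul_nonneg hs (add_nonneg (by norm_num : (0:ℝ) ≤ 39395801209446486633990515218412618131490739179520) (mul_nonneg hs (add_nonneg (by norm_num : (0:ℝ) ≤ 91234186884050091237577399734131184097157017004544) (mul_nonneg hs (add_nonneg (by norm_num : (0:ℝ) ≤ 193608755431420867783777049307467251600988899128576) (mul_nonneg hs (add_nonneg (by norm_num : (0:ℝ) ≤ 377793004472319787037522358979286383336436763140352)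 (mul_nonneg hs (add_nonneg (by norm_num : (0:ℝ) ≤ 679897117710194330946201241326497461537016939281920) (mul_nonneg hs (add_nonneg (by norm_num : (0:ℝ) ≤ 1131409200119565007822570542888758550366018848686080) (mul_nonneg hs (add_nonneg (by norm_num : (0:ℝ) ≤ 1744868632051764246812763713350187124730597057714944) (mul_nonneg hs (add_nonneg (by norm_num : (0:ℝ) ≤ 2498754216172034575891842914072286830818934297254656) (mul_nonneg hs (add_nonneg (by norm_num : (0:ℝ) ≤ 3328441892091376423601924967116338313462138871992832) (mul_nonneg hs (add_nonneg (by norm_num : (0:ℝ) ≤ 4130039312549677161169732991531068962406756058534400) (mul_nonneg hs (add_nonneg (by norm_num : (0:ℝ) ≤ 4779834294755080540466576406479758274851505803142400) (mul_nonneg hs (add_nonneg (by norm_num : (0:ℝ) ≤ 5165180839962153881280302891507158906136224077753600) (mul_nonneg hs (add_nonneg (by norm_num : (0:ℝ) ≤ 5216347536222037889009304211153305639926304085478400) (mul_nonneg hs (add_nonneg (by norm_num : (0:ℝ) ≤ 4926984476783522053802862905980264171370252951884800) (mul_nonneg hs (add_nonneg (by norm_num : (0:ℝ) ≤ 4355022656823021888911005919948897153512363125638400)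 (mul_nonneg hs (add_nonneg (by norm_num : (0:ℝ) ≤ 3604075600261190346298464391486270409371600213440000) (mul_nonneg hs (add_nonneg (by norm_num : (0:ℝ) ≤ 2793397049980620690700894344694209131010369121420800) (mul_nonneg hs (add_nonneg (by norm_num : (0:ℝ) ≤ 2028107201601600563231027520446293914768265148928000) (mul_nonneg hs (add_nonneg (by norm_num : (0:ℝ) ≤ 1379421156053913043149142885897040668239533509344000) (mul_nonneg hs (add_nonneg (by norm_num : (0:ℝ) ≤ 878867363056706741098281178905731068426078579200000) (mul_nonneg hs (add_nonneg (by norm_num : (0:ℝ) ≤ 524429527236382199557346129817969470540669876736000) (mul_nonneg hs (add_nonneg (by norm_num : (0:ℝ) ≤ 292986926316950061176999408923828024914657994752000) (mul_nonneg hs (add_nonneg (by norm_num : (0:ℝ) ≤ 153182082868830067729328922510210299312567184384000) (mul_nonneg hs (add_nonneg (by norm_num : (0:ℝ) ≤ 74904252670631728157553585268072316133500952576000) (mul_nonneg hs (add_nonneg (by norm_num : (0:ℝ) ≤ 34230983275477140505105635746859346524755140608000) (mul_nonneg hs (add_nonneg (by norm_num : (0:ℝ) ≤ 14606743817664609609512520033533818843338178560000)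 (mul_nonneg hs (add_nonneg (by norm_num : (0:ℝ) ≤ 5813544571768723082249651380332445851339571200000) (mul_nonneg hs (add_nonneg (by norm_num : (0:ℝ) ≤ 2155427764589847401728743154728077941659402240000) (mul_nonneg hs (add_nonneg (by norm_num : (0:ℝ) ≤ 743348851234300885411873654149269932678840320000) (mul_nonneg hs (add_nonneg (by norm_num : (0:ℝ) ≤ 238056883485132634356673285511172961735802880000) (mul_nonneg hs (add_nonneg (by norm_num : (0:ℝ) ≤ 70655734780894854016900252311102288486727680000) (mul_nonneg hs (add_nonneg (by norm_num : (0:ℝ) ≤ 19391632663424316882683494923368467802357760000) (mul_nonneg hs (add_nonneg (by norm_num : (0:ℝ) ≤ 4908578683805156362475592287850420492042240000) (mul_nonneg hs (add_nonneg (by norm_num : (0:ℝ) ≤ 1142546041215153123307597665733612614451200000) (mul_nonneg hs (add_nonneg (by norm_num : (0:ℝ) ≤ 243706667733806866722019611186262808985600000) (mul_nonneg hs (add_nonneg (by norm_num : (0:ℝ) ≤ 47445312941834638063874492760456167424000000) (mul_nonneg hs (add_nonneg (by norm_num : (0:ℝ) ≤ 8390993710541963833723479177470725324800000) (mul_nonneg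 hs (add_nonneg (by norm_num : (0:ℝ) ≤ 1340684513635791229177358955484230451200000) (mul_nonneg hs (add_nonneg (by norm_num : (0:ℝ) ≤ 192254344298285060477842628314713292800000) (mul_nonneg hs (add_nonneg (by norm_num : (0:ℝ) ≤ 24548299727891511086571773299890585600000) (mul_nonneg hs (add_nonneg (by norm_num : (0:ℝ) ≤ 2764108416311955843521709031922073600000) (mul_nonneg hs (add_nonneg (by norm_num : (0:ℝ) ≤ 271165247553365171161088533305753600000) (mul_nonneg hs (add_nonneg (by norm_num : (0:ℝ) ≤ 22822620456598720843104421045862400000) (mul_nonneg hs (add_nonneg (by norm_num : (0:ℝ) ≤ 1614865321519746174755491597516800000) (mul_nonneg hs (add_nonneg (by norm_num : (0:ℝ) ≤ 93421939052283870676682539008000000) (mul_nonneg hs (add_nonneg (by norm_num : (0:ℝ) ≤ 4243330451484578876334538752000000) (mul_nonneg hs (add_nonneg (by norm_num : (0:ℝ) ≤ 141908906389013473801745203200000) (mul_nonneg hs (add_nonneg (by norm_num : (0:ℝ) ≤ 3106911156111706289917132800000) (mul_nonneg hs (add_nonneg (by norm_num : (0:ℝ) ≤ 33407646839910820321689600000)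 (mul_nonneg hs (add_nonneg (by norm_num : (0:ℝ) ≤ 0) (mul_nonneg hs (add_nonneg (by norm_num : (0:ℝ) ≤ 0) (mul_nonneg hs (add_nonneg (by norm_num : (0:ℝ) ≤ 0) (mul_nonneg hs (add_nonneg (by norm_num : (0:ℝ) ≤ 0) (mul_nonneg hs (add_nonneg (by norm_num : (0:ℝ) ≤ 0) (mul_nonneg hs (add_nonneg (by norm_num : (0:ℝ) ≤ 0) (mul_nonneg hs (add_nonneg (by norm_num : (0:ℝ) ≤ 0) (mul_nonneg hs (by norm_num : (0:ℝ) ≤ 0)))))))))))))))))))))))))))))))))))))))))))))))))))))))))))))))))))))))))))))))))))))))))))))))))))))))))))))))))))))))))))))))))))))))))))))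
  have hRnn : (0:ℝ) ≤ Bf s - Af s := by
    have hring : Bf s - Af s = (24316802 + s * ((259649166 + s * ((1275656074 + s * ((3818920518 + s * ((7779491958 + s * ((11404574370 + s * ((12405487570 + s * ((10170666240 + s * ((6315159200 + s * ((2955395520 + s * ((1026231360 + s * ((256435200 + s * ((43599360 + s * ((4515840 + s * (215040)))))))))))))))))))))))))))) := by unfold Af Bf; ring
    rw [hring]
    exact (add_nonneg (by norm_num : (0:ℝ) ≤ 24316802) (mul_nonneg hs (add_nonneg (by norm_num : (0:ℝ) ≤ 259649166) (mul_nonneg hs (add_nonneg (by norm_num : (0:ℝ) ≤ 1275656074) (mul_nonneg hs (add_nonneg (by norm_num : (0:ℝ) ≤ 3818920518) (mul_nonneg hs (add_nonneg (by norm_num : (0:ℝ) ≤ 7779491958) (mul_nonneg hs (add_nonneg (by norm_num : (0:ℝ) ≤ 11404574370) (mul_nonneg hs (add_nonneg (by norm_num : (0:ℝ) ≤ 12405487570) (mul_nonneg hs (add_nonneg (by norm_num : (0:ℝ) ≤ 10170666240) (mul_nonneg hs (add_nonneg (by norm_num : (0:ℝ) ≤ 6315159200) (mul_nonneg hs (add_nonneg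 (by norm_num : (0:ℝ) ≤ 2955395520) (mul_nonneg hs (add_nonneg (by norm_num : (0:ℝ) ≤ 1026231360) (mul_nonneg hs (add_nonneg (by norm_num : (0:ℝ) ≤ 256435200) (mul_nonneg hs (add_nonneg (by norm_num : (0:ℝ) ≤ 43599360) (mul_nonneg hs (add_nonneg (by norm_num : (0:ℝ) ≤ 4515840) (mul_nonneg hs (by norm_num : (0:ℝ) ≤ 215040)))))))))))))))))))))))))))))
  have ht : 2*(Gf (x+1) - Gf x) = Af s / Bf s := by
    unfold Gf Af Bf
    rw [hsdef]
    simp only [sub_add_cancel, show x - 1 + 2 = x + 1 by ring]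
    field_simp
    ring
  have htpos : 0 < Af s / Bf s := div_pos hApos hBpos
  have htle1 : Af s / Bf s ≤ 1 := by
    rw [div_le_one hBpos]; linarith
  have hexp : Real.exp (Af s / Bf s) ≤ 1 + (Af s/Bf s) + (Af s/Bf s)^2/2 + (Af s/Bf s)^3/6
      + (Af s/Bf s)^4/24 + (Af s/Bf s)^5/100 := by
    have h := Real.exp_bound' htpos.le htle1 (n := 5) (by norm_num)
    calc Real.exp (Af s / Bf s)
        ≤ (∑ m ∈ Finset.range 5, (Af s/Bf s) ^ m / m.factorial)
          + (Af s/Bf s) ^ 5 * (5 + 1) / (Nat.factorial 5 * 5) := h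
      _ = 1 + (Af s/Bf s) + (Af s/Bf s)^2/2 + (Af s/Bf s)^3/6
          + (Af s/Bf s)^4/24 + (Af s/Bf s)^5/100 := by
          simp [Finset.sum_range_succ, Nat.factorial]
          ring
  have hquot : (Af s/Bf s) + (Af s/Bf s)^2/2 + (Af s/Bf s)^3/6 + (Af s/Bf s)^4/24
      + (Af s/Bf s)^5/100
      = (600*(Af s)*(Bf s)^4 + 300*(Af s)^2*(Bf s)^3 + 100*(Af s)^3*(Bf s)^2
        + 25*(Af s)^4*(Bf s) + 6*(Af s)^5)/(600*(Bf s)^5) := frac_sum _ _ hBpos.ne'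
  have hYpos : (0:ℝ) < 4*x*(x+1) := by positivity
  have hfrac : (600*(Af s)*(Bf s)^4 + 300*(Af s)^2*(Bf s)^3 + 100*(Af s)^3*(Bf s)^2
        + 25*(Af s)^4*(Bf s) + 6*(Af s)^5)/(600*(Bf s)^5) < 1/(4*x*(x+1)) := by
    rw [div_lt_div_iff₀ (by positivity) hYpos]
    have hp := polykey s
    rw [h1, h2] at hp
    nlinarith [hPpos]
  rw [ht]
  calc Real.exp (Af s / Bf s)
      ≤ 1 + ((Af s/Bf s) + (Af s/Bf s)^2/2 + (Af s/Bf s)^3/6 + (Af s/Bf s)^4/24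
        + (Af s/Bf s)^5/100) := by linarith [hexp]
    _ < 1 + 1/(4*x*(x+1)) := by
        rw [hquot]
        linarith [hfrac]

noncomputable def aseq (n : ℕ) : ℝ :=
  ((2*n).choose n : ℝ) * Real.sqrt (Real.pi * n) * Real.exp (-(Gf n)) / 4^n

lemma choose_pos_real (n : ℕ) : (0:ℝ) < ((2*n).choose n : ℝ) := by
  exact_mod_cast Nat.choose_pos (by omega)

lemma choose_rec (n : ℕ) :
    (((2*(n+1)).choose (n+1)) : ℝ) * ((n:ℝ)+1) = 2*(2*(n:ℝ)+1) * ((2*n).choose n : ℝ) := by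
  have h : (n+1) * (2*(n+1)).choose (n+1) = 2 * (2*n+1) * ((2*n).choose n) := by
    simpa [Nat.centralBinom] using Nat.succ_mul_centralBinom_succ n
  have hc := congrArg (fun k : ℕ => (k:ℝ)) h
  push_cast at hc
  linear_combination hc

lemma aseq_lt_succ (n : ℕ) (hn : 1 ≤ n) : aseq n < aseq (n+1) := by
  have hx1 : (1:ℝ) ≤ (n:ℝ) := by exact_mod_cast hn
  have hx0 : (0:ℝ) < (n:ℝ) := by linarith
  have hxp1 : (0:ℝ) < (n:ℝ)+1 := by linarith
  have hc := choose_pos_real n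
  have hE := core_ineq (n:ℝ) hx1
  have hE2 : Real.exp (2*(Gf ((n:ℝ)+1) - Gf (n:ℝ))) * (4*(n:ℝ)*((n:ℝ)+1)) < (2*(n:ℝ)+1)^2 := by
    have h4 : (0:ℝ) < 4*(n:ℝ)*((n:ℝ)+1) := by positivity
    have h5 := mul_lt_mul_of_pos_right hE h4
    have hid : (1 + 1/(4*(n:ℝ)*((n:ℝ)+1))) * (4*(n:ℝ)*((n:ℝ)+1)) = (2*(n:ℝ)+1)^2 := by
      field_simp; ring
    linarith [h5, hid.le, hid.ge]
  have hsplit : Real.exp (2*(Gf ((n:ℝ)+1) - Gf (n:ℝ))) * Real.exp (-(Gf ((n:ℝ)+1)))^2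
      = Real.exp (-(Gf (n:ℝ)))^2 := by
    rw [sq, sq, ← Real.exp_add, ← Real.exp_add, ← Real.exp_add, Real.exp_eq_exp]
    ring
  have e1 : Real.sqrt (Real.pi*(n:ℝ))^2 = Real.pi*(n:ℝ) := Real.sq_sqrt (by positivity)
  have e2 : Real.sqrt (Real.pi*((n:ℝ)+1))^2 = Real.pi*((n:ℝ)+1) := Real.sq_sqrt (by positivity)
  have hsq : (4*((n:ℝ)+1) * Real.sqrt (Real.pi*(n:ℝ)) * Real.exp (-(Gf (n:ℝ))))^2
      < (2*(2*(n:ℝ)+1) * Real.sqrt (Real.pi*((n:ℝ)+1)) * Real.exp (-(Gf ((n:ℝ)+1))))^2 := by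
    have hL : (4*((n:ℝ)+1) * Real.sqrt (Real.pi*(n:ℝ)) * Real.exp (-(Gf (n:ℝ))))^2
        = (Real.exp (2*(Gf ((n:ℝ)+1) - Gf (n:ℝ))) * (4*(n:ℝ)*((n:ℝ)+1)))
          * (4*Real.pi*((n:ℝ)+1) * Real.exp (-(Gf ((n:ℝ)+1)))^2) := by
      rw [mul_pow, mul_pow, e1, ← hsplit]; ring
    have hR : (2*(2*(n:ℝ)+1) * Real.sqrt (Real.pi*((n:ℝ)+1)) * Real.exp (-(Gf ((n:ℝ)+1))))^2
        = (2*(n:ℝ)+1)^2 * (4*Real.pi*((n:ℝ)+1) * Real.exp (-(Gf ((n:ℝ)+1)))^2) := by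
      rw [mul_pow, mul_pow, e2]; ring
    rw [hL, hR]
    have hfac : (0:ℝ) < 4*Real.pi*((n:ℝ)+1)*Real.exp (-(Gf ((n:ℝ)+1)))^2 := by positivity
    exact mul_lt_mul_of_pos_right hE2 hfac
  have key2 : 4*((n:ℝ)+1) * Real.sqrt (Real.pi*(n:ℝ)) * Real.exp (-(Gf (n:ℝ)))
      < 2*(2*(n:ℝ)+1) * Real.sqrt (Real.pi*((n:ℝ)+1)) * Real.exp (-(Gf ((n:ℝ)+1))) := by
    have hRnn : 0 ≤ 2*(2*(n:ℝ)+1) * Real.sqrt (Real.pi*((n:ℝ)+1)) * Real.exp (-(Gf ((n:ℝ)+1))) := by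
      positivity
    exact lt_of_pow_lt_pow_left₀ 2 hRnn hsq
  have hrec := choose_rec n
  have hcast : ((n+1:ℕ):ℝ) = (n:ℝ)+1 := by push_cast; ring
  unfold aseq
  rw [hcast]
  rw [div_lt_div_iff₀ (by positivity) (by positivity)]
  have step1 : (((2*n).choose n : ℝ) * Real.sqrt (Real.pi*(n:ℝ)) * Real.exp (-(Gf (n:ℝ)))) * 4 * ((n:ℝ)+1)
      < (((2*(n+1)).choose (n+1) : ℝ) * Real.sqrt (Real.pi*((n:ℝ)+1)) * Real.exp (-(Gf ((n:ℝ)+1)))) * ((n:ℝ)+1) := by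
    calc (((2*n).choose n : ℝ) * Real.sqrt (Real.pi*(n:ℝ)) * Real.exp (-(Gf (n:ℝ)))) * 4 * ((n:ℝ)+1)
        = ((2*n).choose n : ℝ) * (4*((n:ℝ)+1) * Real.sqrt (Real.pi*(n:ℝ)) * Real.exp (-(Gf (n:ℝ)))) := by
          ring
      _ < ((2*n).choose n : ℝ) * (2*(2*(n:ℝ)+1) * Real.sqrt (Real.pi*((n:ℝ)+1)) * Real.exp (-(Gf ((n:ℝ)+1)))) :=
          by exact mul_lt_mul_of_pos_left key2 hc
      _ = (2*(2*(n:ℝ)+1) * ((2*n).choose n : ℝ)) * (Real.sqrt (Real.pi*((n:ℝ)+1)) * Real.exp (-(Gf ((n:ℝ)+1)))) := by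
          ring
      _ = (((2*(n+1)).choose (n+1) : ℝ) * ((n:ℝ)+1)) * (Real.sqrt (Real.pi*((n:ℝ)+1)) * Real.exp (-(Gf ((n:ℝ)+1)))) := by
          rw [hrec]
      _ = (((2*(n+1)).choose (n+1) : ℝ) * Real.sqrt (Real.pi*((n:ℝ)+1)) * Real.exp (-(Gf ((n:ℝ)+1)))) * ((n:ℝ)+1) := by
          ring
  have step2 : (((2*n).choose n : ℝ) * Real.sqrt (Real.pi*(n:ℝ)) * Real.exp (-(Gf (n:ℝ)))) * 4
      < ((2*(n+1)).choose (n+1) : ℝ) * Real.sqrt (Real.pi*((n:ℝ)+1)) * Real.exp (-(Gf ((n:ℝ)+1))) :=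
    lt_of_mul_lt_mul_right step1 hxp1.le
  have h4n : (0:ℝ) < 4^n := by positivity
  calc ((2*n).choose n : ℝ) * Real.sqrt (Real.pi*(n:ℝ)) * Real.exp (-(Gf (n:ℝ))) * 4^(n+1)
      = ((((2*n).choose n : ℝ) * Real.sqrt (Real.pi*(n:ℝ)) * Real.exp (-(Gf (n:ℝ)))) * 4) * 4^n := by
        rw [pow_succ]; ring
    _ < (((2*(n+1)).choose (n+1) : ℝ) * Real.sqrt (Real.pi*((n:ℝ)+1)) * Real.exp (-(Gf ((n:ℝ)+1)))) * 4^n :=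
        mul_lt_mul_of_pos_right step2 h4n

lemma stirling_pos (n : ℕ) (hn : 1 ≤ n) : 0 < stirlingSeq n := by
  obtain ⟨m, rfl⟩ : ∃ m, n = m+1 := ⟨n-1, by omega⟩
  exact stirlingSeq'_pos m

lemma aseq_eq (n : ℕ) (hn : 1 ≤ n) :
    aseq n = Real.sqrt Real.pi * stirlingSeq (2*n) / stirlingSeq n ^ 2 * Real.exp (-(Gf n)) := by
  have hn0 : (0:ℝ) < (n:ℝ) := by exact_mod_cast hn
  have hq : (0:ℝ) < ((n:ℝ)/Real.exp 1)^n := by positivity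
  have hr : (0:ℝ) < Real.sqrt n := Real.sqrt_pos.mpr hn0
  have hs1 : 0 < stirlingSeq n := stirling_pos n hn
  have hs2 : 0 < stirlingSeq (2*n) := stirling_pos (2*n) (by omega)
  have hfn : (Nat.factorial n : ℝ) = stirlingSeq n * (Real.sqrt (2*(n:ℝ)) * ((n:ℝ)/Real.exp 1)^n) := by
    rw [stirlingSeq, div_mul_cancel₀]
    positivity
  have hcast2 : ((2*n:ℕ):ℝ) = 2*(n:ℝ) := by push_cast; ring
  have hf2n : (Nat.factorial (2*n) : ℝ) = stirlingSeq (2*n) *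
      (Real.sqrt (2*((2*n:ℕ):ℝ)) * (((2*n:ℕ):ℝ)/Real.exp 1)^(2*n)) := by
    rw [stirlingSeq, div_mul_cancel₀]
    rw [hcast2]
    positivity
  have hsq1 : Real.sqrt (2*((2*n:ℕ):ℝ)) = 2 * Real.sqrt n := by
    rw [hcast2, show (2:ℝ)*(2*(n:ℝ)) = 2^2 * (n:ℝ) by ring,
      Real.sqrt_mul (by norm_num : (0:ℝ) ≤ 2^2), Real.sqrt_sq (by norm_num : (0:ℝ) ≤ 2)]
  have hsq2 : (((2*n:ℕ):ℝ)/Real.exp 1)^(2*n) = 4^n * (((n:ℝ)/Real.exp 1)^n)^2 := by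
    rw [hcast2, mul_div_assoc, mul_pow, pow_mul' ((n:ℝ)/Real.exp 1) 2 n,
      show ((2:ℝ))^(2*n) = 4^n by rw [pow_mul]; norm_num]
  have hchoosefac := Nat.choose_mul_factorial_mul_factorial (show n ≤ 2*n by omega)
  rw [show 2*n - n = n by omega] at hchoosefac
  have hchoose : ((2*n).choose n : ℝ) * ((Nat.factorial n : ℝ) * (Nat.factorial n : ℝ)) = (Nat.factorial (2*n) : ℝ) := by
    rw [← mul_assoc]
    exact_mod_cast congrArg (fun k : ℕ => (k:ℝ)) hchoosefac
  have expand : (Nat.factorial n : ℝ) * (Nat.factorial n : ℝ)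
      = stirlingSeq n^2 * (2*(n:ℝ)) * (((n:ℝ)/Real.exp 1)^n)^2 := by
    have hss : Real.sqrt (2*(n:ℝ))^2 = 2*(n:ℝ) := Real.sq_sqrt (by positivity)
    rw [hfn]
    linear_combination (stirlingSeq n^2 * (((n:ℝ)/Real.exp 1)^n)^2) * hss
  have h2F : (Nat.factorial (2*n) : ℝ) = stirlingSeq (2*n) * (2*Real.sqrt n) * (4^n * (((n:ℝ)/Real.exp 1)^n)^2) := by
    rw [hf2n, hsq1, hsq2]; ring
  have hmain : ((2*n).choose n : ℝ) * (stirlingSeq n^2 * (2*(n:ℝ)) * (((n:ℝ)/Real.exp 1)^n)^2)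
      = stirlingSeq (2*n) * (2*Real.sqrt n) * (4^n * (((n:ℝ)/Real.exp 1)^n)^2) := by
    rw [← expand, ← h2F]; exact hchoose
  have hnsq : (n:ℝ) = Real.sqrt n ^ 2 := (Real.sq_sqrt hn0.le).symm
  have hcF : ((2*n).choose n : ℝ) = stirlingSeq (2*n) * 4^n / (stirlingSeq n^2 * Real.sqrt n) := by
    rw [eq_div_iff (mul_ne_zero (pow_ne_zero 2 hs1.ne') hr.ne')]
    apply mul_right_cancel₀
      (show (2*(((n:ℝ)/Real.exp 1)^n)^2 * Real.sqrt n : ℝ) ≠ 0 from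
        mul_ne_zero (mul_ne_zero two_ne_zero (pow_ne_zero 2 hq.ne')) hr.ne')
    linear_combination hmain - 2*((2*n).choose n : ℝ)*stirlingSeq n^2*(((n:ℝ)/Real.exp 1)^n)^2*hnsq
  unfold aseq
  rw [Real.sqrt_mul Real.pi_pos.le, hcF]
  field_simp

lemma aseq_tendsto : Filter.Tendsto aseq Filter.atTop (nhds 1) := by
  have hx : Filter.Tendsto (fun n:ℕ => (n:ℝ)) Filter.atTop Filter.atTop :=
    tendsto_natCast_atTop_atTop
  have hd1 : Filter.Tendsto (fun n:ℕ => 8*(n:ℝ)) Filter.atTop Filter.atTop :=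
    hx.const_mul_atTop (by norm_num)
  have hd3 : Filter.Tendsto (fun n:ℕ => 192*(n:ℝ)^3) Filter.atTop Filter.atTop :=
    (((tendsto_pow_atTop (by norm_num : (3:ℕ) ≠ 0)).comp hx).const_mul_atTop (by norm_num))
  have hd5 : Filter.Tendsto (fun n:ℕ => 640*(n:ℝ)^5) Filter.atTop Filter.atTop :=
    (((tendsto_pow_atTop (by norm_num : (5:ℕ) ≠ 0)).comp hx).const_mul_atTop (by norm_num))
  have hd7 : Filter.Tendsto (fun n:ℕ => 14336*(n:ℝ)^7) Filter.atTop Filter.atTop :=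
    (((tendsto_pow_atTop (by norm_num : (7:ℕ) ≠ 0)).comp hx).const_mul_atTop (by norm_num))
  have hG : Filter.Tendsto (fun n:ℕ => Gf (n:ℝ)) Filter.atTop (nhds 0) := by
    unfold Gf
    have t1 := Filter.Tendsto.div_atTop (tendsto_const_nhds (x := (-1:ℝ))) hd1
    have t3 := Filter.Tendsto.div_atTop (tendsto_const_nhds (x := (1:ℝ))) hd3
    have t5 := Filter.Tendsto.div_atTop (tendsto_const_nhds (x := (1:ℝ))) hd5
    have t7 := Filter.Tendsto.div_atTop (tendsto_const_nhds (x := (17:ℝ))) hd7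
    simpa using ((t1.add t3).sub t5).add t7
  have hGexp : Filter.Tendsto (fun n:ℕ => Real.exp (-(Gf n))) Filter.atTop (nhds 1) := by
    have hGneg : Filter.Tendsto (fun n:ℕ => -(Gf (n:ℝ))) Filter.atTop (nhds 0) := by
      simpa using hG.neg
    have := (Real.continuous_exp.tendsto 0).comp hGneg
    rw [Real.exp_zero] at this
    exact this
  have h2n : Filter.Tendsto (fun n:ℕ => stirlingSeq (2*n)) Filter.atTop (nhds (Real.sqrt Real.pi)) :=
    tendsto_stirlingSeq_sqrt_pi.comp
      (Filter.tendsto_atTop_atTop_of_monotone (fun a b h => by omega) (fun b => ⟨b, by omega⟩))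
  have h1n := tendsto_stirlingSeq_sqrt_pi
  have hsp : (0:ℝ) < Real.sqrt Real.pi := Real.sqrt_pos.mpr Real.pi_pos
  have hF : Filter.Tendsto
      (fun n:ℕ => Real.sqrt Real.pi * stirlingSeq (2*n) / stirlingSeq n ^ 2 * Real.exp (-(Gf n)))
      Filter.atTop (nhds (Real.sqrt Real.pi * Real.sqrt Real.pi / Real.sqrt Real.pi ^ 2 * 1)) :=
    ((tendsto_const_nhds.mul h2n).div (h1n.pow 2) (by positivity)).mul hGexp
  have hval : Real.sqrt Real.pi * Real.sqrt Real.pi / Real.sqrt Real.pi ^ 2 * 1 = 1 := by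
    rw [← sq]
    field_simp
  rw [hval] at hF
  apply hF.congr'
  filter_upwards [Filter.eventually_ge_atTop 1] with n hn
  exact (aseq_eq n hn).symm

lemma aseq_lt_one (n : ℕ) (hn : 1 ≤ n) : aseq n < 1 := by
  have mono_le : ∀ j k : ℕ, 1 ≤ j → j ≤ k → aseq j ≤ aseq k := by
    intro j k hj hjk
    induction k with
    | zero => exact absurd hjk (by omega)
    | succ k ih =>
      rcases Nat.eq_or_lt_of_le hjk with h | h
      · exact h ▸ le_refl _
      · exact (ih (by omega)).trans (aseq_lt_succ k (by omega)).le
  have h1 : aseq (n+1) ≤ 1 :=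
    ge_of_tendsto aseq_tendsto (by
      filter_upwards [Filter.eventually_ge_atTop (n+1)] with k hk
      exact mono_le (n+1) k (by omega) hk)
  exact lt_of_lt_of_le (aseq_lt_succ n hn) h1

theorem stmt10 (n : ℕ) (hn : 0 < n) :
    ((2 * n).choose n : ℝ) < 4 ^ n / Real.sqrt (Real.pi * n) *
      Real.exp (-1 / (8 * n) + 1 / (192 * n ^ 3) - 1 / (640 * n ^ 5) + 17 / (14336 * n ^ 7)) := by
  have h := aseq_lt_one n hn
  unfold aseq at h
  have hn0 : (0:ℝ) < (n:ℝ) := by exact_mod_cast hn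
  have hπ : (0:ℝ) < Real.sqrt (Real.pi * n) := Real.sqrt_pos.mpr (by positivity)
  rw [div_lt_one (by positivity)] at h
  have h2 := mul_lt_mul_of_pos_right h (Real.exp_pos (Gf n))
  have hid : ((2*n).choose n : ℝ) * Real.sqrt (Real.pi * n) * Real.exp (-(Gf n)) * Real.exp (Gf n)
      = ((2*n).choose n : ℝ) * Real.sqrt (Real.pi * n) := by
    rw [mul_assoc, ← Real.exp_add]
    simp
  rw [hid] at h2
  show ((2 * n).choose n : ℝ) < 4 ^ n / Real.sqrt (Real.pi * n) * Real.exp (Gf n)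
  rw [div_mul_eq_mul_div, lt_div_iff₀ hπ]
  linarith [h2]
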